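/- Let (L, d) be a metric space equipped with a Borel measure μ_L, let n be a natural number and C > 0 a constant such that μ_L of every closed ball of radius s > 0 is at most C·sⁿ. Then there exists a constant C′ > 0 such that for every c ∈ (0, 1], every y ∈ L, and every r ≥ 0, one has (1/cⁿ) · (Lebesgue ⊗ μ_L)({(λ, y′) ∈ ℝ × L : sqrt((d(y, y′)/c)² + λ²) ≤ r}) ≤ C′ · (1 + r)^(n+1). -/

import Mathlib

open MeasureTheory

/-- Polynomial growth of the length function `sqrt((d(y,y′)/c)² + λ²)` with respect
to the Haar system `(1/cⁿ) dλ dμ_L`, uniformly in `c ∈ (0,1]`, given a polynomial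
upper volume bound on balls of `L`. -/
theorem length_function_polynomial_growth {L : Type*} [MetricSpace L]
    [MeasurableSpace L] [BorelSpace L] (μL : Measure L) (n : ℕ) (C : ℝ) (hC : 0 < C)
    (hvol : ∀ (y : L) (s : ℝ), 0 < s →
      μL (Metric.closedBall y s) ≤ ENNReal.ofReal (C * s ^ n)) :
    ∃ C' : ℝ, 0 < C' ∧
      ∀ c : ℝ, c ∈ Set.Ioc (0:ℝ) 1 → ∀ (y : L) (r : ℝ), 0 ≤ r →
        ENNReal.ofReal (1 / c ^ n) *
          (volume.prod μL)
            {p : ℝ × L | Real.sqrt ((dist y p.2 / c) ^ 2 + p.1 ^ 2) ≤ r}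
          ≤ ENNReal.ofReal (C' * (1 + r) ^ (n + 1)) := by
  refine ⟨2 * C, by positivity, ?_⟩
  intro c hc y r hr
  obtain ⟨hc0, hc1⟩ := hc
  haveI : SigmaFinite μL := by
    refine Measure.sigmaFinite_of_countable
      (S := Set.range (fun k : ℕ => Metric.closedBall y (k + 1)))
      (Set.countable_range _) ?_ ?_
    · rintro s ⟨k, rfl⟩
      exact lt_of_le_of_lt (hvol y (k + 1) (by positivity)) ENNReal.ofReal_lt_top
    · rw [Set.sUnion_range]
      ext z
      simp only [Set.mem_iUnion, Set.mem_univ, iff_true, Metric.mem_closedBall]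
      exact ⟨⌈dist z y⌉₊, (Nat.le_ceil _).trans (by push_cast; linarith)⟩
  rcases eq_or_lt_of_le hr with h0 | hrpos
  · -- r = 0 case: the set has measure zero
    have hsub : {p : ℝ × L | Real.sqrt ((dist y p.2 / c) ^ 2 + p.1 ^ 2) ≤ r}
        ⊆ ({(0:ℝ)} : Set ℝ) ×ˢ (Set.univ : Set L) := by
      intro p hp
      simp only [Set.mem_setOf_eq] at hp
      have hnn : 0 ≤ (dist y p.2 / c) ^ 2 + p.1 ^ 2 := by positivity
      have hs0 : Real.sqrt ((dist y p.2 / c) ^ 2 + p.1 ^ 2) = 0 :=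
        le_antisymm (hp.trans (le_of_eq h0.symm)) (Real.sqrt_nonneg _)
      have hsum0 : (dist y p.2 / c) ^ 2 + p.1 ^ 2 = 0 := by
        have := Real.sqrt_eq_zero hnn |>.mp hs0
        linarith
      have hp1 : p.1 = 0 := by nlinarith [sq_nonneg (dist y p.2 / c), sq_nonneg p.1]
      exact ⟨hp1, Set.mem_univ _⟩
    have hzero : (volume.prod μL)
        {p : ℝ × L | Real.sqrt ((dist y p.2 / c) ^ 2 + p.1 ^ 2) ≤ r} = 0 := by
      refine measure_mono_null hsub ?_
      rw [Measure.prod_prod]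
      simp
    rw [hzero, mul_zero]
    exact zero_le'
  · -- r > 0 case
    have hcr : 0 < c * r := mul_pos hc0 hrpos
    have hsub : {p : ℝ × L | Real.sqrt ((dist y p.2 / c) ^ 2 + p.1 ^ 2) ≤ r}
        ⊆ (Set.Icc (-r) r) ×ˢ (Metric.closedBall y (c * r)) := by
      intro p hp
      simp only [Set.mem_setOf_eq] at hp
      have hnn : 0 ≤ (dist y p.2 / c) ^ 2 + p.1 ^ 2 := by positivity
      have hsum : (dist y p.2 / c) ^ 2 + p.1 ^ 2 ≤ r ^ 2 := by
        have h1 : ((dist y p.2 / c) ^ 2 + p.1 ^ 2) = (Real.sqrt ((dist y p.2 / c) ^ 2 + p.1 ^ 2)) ^ 2 :=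
          (Real.sq_sqrt hnn).symm
        rw [h1]
        exact pow_le_pow_left₀ (Real.sqrt_nonneg _) hp 2
      constructor
      · -- p.1 ∈ Icc (-r) r
        have h2 : p.1 ^ 2 ≤ r ^ 2 := by nlinarith [sq_nonneg (dist y p.2 / c)]
        have : |p.1| ≤ r := by
          have := Real.sqrt_le_sqrt h2
          rwa [Real.sqrt_sq_eq_abs, Real.sqrt_sq hr] at this
        exact Set.mem_Icc.mpr (abs_le.mp this)
      · -- p.2 ∈ closedBall y (c*r)
        have h3 : (dist y p.2 / c) ^ 2 ≤ r ^ 2 := by nlinarith [sq_nonneg p.1]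
        have hd : dist y p.2 / c ≤ r := by
          have := Real.sqrt_le_sqrt h3
          rwa [Real.sqrt_sq (by positivity), Real.sqrt_sq hr] at this
        have : dist y p.2 ≤ c * r := by
          rw [div_le_iff₀ hc0] at hd
          linarith [hd]
        simpa [Metric.mem_closedBall, dist_comm] using this
    calc ENNReal.ofReal (1 / c ^ n) *
          (volume.prod μL) {p : ℝ × L | Real.sqrt ((dist y p.2 / c) ^ 2 + p.1 ^ 2) ≤ r}
        ≤ ENNReal.ofReal (1 / c ^ n) *
          ((volume.prod μL) ((Set.Icc (-r) r) ×ˢ (Metric.closedBall y (c * r)))) :=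
          mul_le_mul_right (measure_mono hsub) _
      _ = ENNReal.ofReal (1 / c ^ n) *
          (ENNReal.ofReal (2 * r) * μL (Metric.closedBall y (c * r))) := by
          rw [Measure.prod_prod, Real.volume_Icc]
          ring_nf
      _ ≤ ENNReal.ofReal (1 / c ^ n) *
          (ENNReal.ofReal (2 * r) * ENNReal.ofReal (C * (c * r) ^ n)) :=
          mul_le_mul_right (mul_le_mul_right (hvol y _ hcr) _) _
      _ = ENNReal.ofReal ((1 / c ^ n) * (2 * r * (C * (c * r) ^ n))) := by
          rw [← ENNReal.ofReal_mul (by positivity), ← ENNReal.ofReal_mul (by positivity)]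
      _ ≤ ENNReal.ofReal (2 * C * (1 + r) ^ (n + 1)) := by
          apply ENNReal.ofReal_le_ofReal
          have hcn : (0:ℝ) < c ^ n := by positivity
          have heq : (1 / c ^ n) * (2 * r * (C * (c * r) ^ n)) = 2 * C * r ^ (n + 1) := by
            field_simp
            ring
          rw [heq]
          have : r ^ (n + 1) ≤ (1 + r) ^ (n + 1) :=
            pow_le_pow_left₀ hr (by linarith) _
          nlinarith
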